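/- Let (K_t)_{t∈J} be a family of Markov kernels on a compact metric space S, with J ⊆ (0,∞) and inf J = 0. The following are equivalent: (i) for every continuous f : S → ℝ, ‖K_t f − f‖_∞ → 0 as t → 0+; (ii) for every ε > 0, K_t(x, B(x,ε)ᶜ) → 0 as t → 0+, uniformly in x ∈ S; (iii) W₁(K_t(x,·), δ_x) → 0 as t → 0+, uniformly in x ∈ S. -/

import Mathlib

open MeasureTheory ProbabilityTheory Filter Metric Set

section Aux

variable {S : Type*} [MetricSpace S] [CompactSpace S] [MeasurableSpace S] [BorelSpace S]

lemma aux_integrable (μ : Measure S) [IsFiniteMeasure μ] {f : S → ℝ} (hf : Continuous f) :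
    Integrable f μ :=
  hf.integrable_of_hasCompactSupport (HasCompactSupport.of_compactSpace f)

lemma lip_bound (μ : Measure S) [IsProbabilityMeasure μ] (x : S) {f : S → ℝ}
    (hf : LipschitzWith 1 f) : |(∫ y, f y ∂μ) - f x| ≤ ∫ y, dist y x ∂μ := by
  have h1 : Integrable f μ := aux_integrable μ hf.continuous
  have h2 : Integrable (fun y => dist y x) μ :=
    aux_integrable μ (continuous_id.dist continuous_const)
  have he : (∫ y, f y ∂μ) - f x = ∫ y, (f y - f x) ∂μ := by
    rw [integral_sub h1 (integrable_const _), integral_const]; simp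
  rw [he]
  calc |∫ y, (f y - f x) ∂μ| ≤ ∫ y, |f y - f x| ∂μ := by
        simpa [Real.norm_eq_abs] using norm_integral_le_integral_norm (fun y => f y - f x)
    _ ≤ ∫ y, dist y x ∂μ := by
        refine integral_mono (h1.sub (integrable_const _)).abs h2 (fun y => ?_)
        simpa [Real.dist_eq] using hf.dist_le_mul y x

lemma lip_bound_diam (μ : Measure S) [IsProbabilityMeasure μ] (x : S) {f : S → ℝ}
    (hf : LipschitzWith 1 f) :
    |(∫ y, f y ∂μ) - f x| ≤ Metric.diam (Set.univ : Set S) := by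
  refine (lip_bound μ x hf).trans ?_
  have h2 : Integrable (fun y => dist y x) μ :=
    aux_integrable μ (continuous_id.dist continuous_const)
  calc ∫ y, dist y x ∂μ ≤ ∫ _y, Metric.diam (Set.univ : Set S) ∂μ := by
        refine integral_mono h2 (integrable_const _) (fun y => ?_)
        exact Metric.dist_le_diam_of_mem isCompact_univ.isBounded (mem_univ _) (mem_univ _)
    _ = Metric.diam (Set.univ : Set S) := by simp

end Aux

/-- The Wasserstein-1 (Kantorovich-Rubinstein) distance, defined by duality as the
supremum of `|∫ f dμ − ∫ f dν|` over 1-Lipschitz functions `f`. -/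
noncomputable def W1 {S : Type*} [MetricSpace S] [MeasurableSpace S]
    (μ ν : Measure S) : ℝ :=
  ⨆ f : {f : S → ℝ // LipschitzWith 1 f}, |∫ x, f.1 x ∂μ - ∫ x, f.1 x ∂ν|

/-- For a family of Markov kernels `(K_t)_{t ∈ J}` on a compact metric space, with
`J ⊆ (0,∞)` and `inf J = 0`, the following are equivalent:
(i) `‖K_t f − f‖_∞ → 0` as `t → 0+` for every continuous `f`;
(ii) for every `ε > 0`, `K_t(x, B(x,ε)ᶜ) → 0` as `t → 0+`, uniformly in `x`;
(iii) `W₁(K_t(x,·), δ_x) → 0` as `t → 0+`, uniformly in `x`. -/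
theorem stmt9 {S : Type*} [MetricSpace S] [CompactSpace S]
    [MeasurableSpace S] [BorelSpace S]
    (J : Set ℝ) (hJ : J ⊆ Set.Ioi 0) (hinf : sInf J = 0) (hne : J.Nonempty)
    (K : ℝ → Kernel S S) (hK : ∀ t ∈ J, IsMarkovKernel (K t)) :
    List.TFAE
      [ ∀ f : C(S, ℝ), ∀ ε > (0:ℝ), ∃ δ > (0:ℝ), ∀ t ∈ J, t < δ →
          ∀ x : S, |(∫ y, f y ∂(K t x)) - f x| ≤ ε,
        ∀ ε > (0:ℝ), ∀ η > (0:ℝ), ∃ δ > (0:ℝ), ∀ t ∈ J, t < δ →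
          ∀ x : S, ((K t x) (Metric.ball x ε)ᶜ).toReal ≤ η,
        ∀ η > (0:ℝ), ∃ δ > (0:ℝ), ∀ t ∈ J, t < δ →
          ∀ x : S, W1 (K t x) (Measure.dirac x) ≤ η ] := by
  set D := Metric.diam (Set.univ : Set S) with hD
  have hD0 : 0 ≤ D := Metric.diam_nonneg
  haveI : Nonempty {f : S → ℝ // LipschitzWith 1 f} :=
    ⟨⟨fun _ => 0, LipschitzWith.const' 0⟩⟩
  tfae_have 1 → 2 := by
    intro h1 ε hε η hη
    rcases isEmpty_or_nonempty S with hS | hS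
    · exact ⟨1, one_pos, fun t ht htδ x => (IsEmpty.false x).elim⟩
    obtain ⟨T, -, hTfin, hTcov⟩ :=
      finite_cover_balls_of_compact (isCompact_univ : IsCompact (Set.univ : Set S)) (show (0:ℝ) < ε/4 by linarith)
    -- the bump functions
    have hεpos : (0:ℝ) < 4/ε := by positivity
    set g : S → S → ℝ := fun c y => max 0 (min 1 (2 - (4/ε) * dist y c)) with hg
    have hgcont : ∀ c, Continuous (g c) := fun c =>
      continuous_const.max (continuous_const.min
        (continuous_const.sub (continuous_const.mul ((continuous_id.dist continuous_const)))))
    have hgle : ∀ c y, g c y ≤ 1 := fun c y =>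
      max_le zero_le_one (min_le_left _ _)
    have hg1 : ∀ c y, dist y c < ε/4 → g c y = 1 := by
      intro c y hyc
      have h4 : (4/ε) * dist y c ≤ 1 := by
        rw [div_mul_eq_mul_div, div_le_one hε]
        nlinarith [dist_nonneg (x := y) (y := c)]
      have : (1:ℝ) ≤ 2 - (4/ε) * dist y c := by linarith
      rw [hg]; simp only [min_eq_left this]
      exact max_eq_right zero_le_one
    have hg0 : ∀ c y, 3*ε/4 ≤ dist y c → g c y = 0 := by
      intro c y hyc
      have h4 : (3:ℝ) ≤ (4/ε) * dist y c := by
        rw [div_mul_eq_mul_div, le_div_iff₀ hε]; nlinarith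
      have hle : min 1 (2 - (4/ε) * dist y c) ≤ 0 :=
        le_trans (min_le_right _ _) (by linarith)
      exact max_eq_left hle
    -- choose δ for each center
    have := fun c : S => h1 ⟨g c, hgcont c⟩ η hη
    choose δf hδfpos hδf using this
    have hTne : (hTfin.toFinset).Nonempty := by
      obtain ⟨x0⟩ := hS
      have := hTcov (mem_univ x0)
      simp only [Set.mem_iUnion] at this
      obtain ⟨c, hc, -⟩ := this
      exact ⟨c, hTfin.mem_toFinset.mpr hc⟩
    refine ⟨hTfin.toFinset.inf' hTne δf, ?_, ?_⟩
    · simp only [gt_iff_lt, Finset.lt_inf'_iff]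
      exact fun c _ => hδfpos c
    intro t ht htδ x
    haveI := hK t ht
    obtain ⟨c, hcT, hxc⟩ : ∃ c ∈ T, x ∈ Metric.ball c (ε/4) := by
      have := hTcov (mem_univ x)
      simpa [Metric.mem_ball] using this
    rw [Metric.mem_ball] at hxc
    have htc : t < δf c :=
      lt_of_lt_of_le htδ (Finset.inf'_le _ (hTfin.mem_toFinset.mpr hcT))
    have hbound := hδf c t ht htc x
    have hgx : g c x = 1 := hg1 c x hxc
    have hind : ∀ y, Set.indicator (Metric.ball x ε)ᶜ (1 : S → ℝ) y ≤ 1 - g c y := by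
      intro y
      by_cases hy : y ∈ (Metric.ball x ε)ᶜ
      · simp only [Set.indicator_of_mem hy, Pi.one_apply]
        have hyx : ε ≤ dist y x := by
          simpa [Metric.mem_ball, not_lt] using hy
        have hyc : 3*ε/4 ≤ dist y c := by
          have h1 : dist x c < ε/4 := hxc
          have h2 : dist y x ≤ dist y c + dist c x := dist_triangle _ _ _
          have h3 : dist c x = dist x c := dist_comm _ _
          linarith
        rw [hg0 c y hyc]; norm_num
      · simp only [Set.indicator_of_notMem hy]
        have := hgle c y; linarith
    have hmeas : MeasurableSet ((Metric.ball x ε)ᶜ : Set S) :=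
      measurableSet_ball.compl
    calc ((K t x) (Metric.ball x ε)ᶜ).toReal
        = ∫ y, Set.indicator (Metric.ball x ε)ᶜ (1 : S → ℝ) y ∂(K t x) := by
          rw [integral_indicator_one hmeas, Measure.real]
      _ ≤ ∫ y, (1 - g c y) ∂(K t x) := by
          refine integral_mono ?_ ?_ hind
          · exact ((integrable_const (1:ℝ) : Integrable (1 : S → ℝ) _)).indicator hmeas
          · exact (integrable_const 1).sub (aux_integrable _ (hgcont c))
      _ = 1 - ∫ y, g c y ∂(K t x) := by
          rw [integral_sub (integrable_const 1) (aux_integrable _ (hgcont c)), integral_const]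
          simp
      _ = g c x - ∫ y, g c y ∂(K t x) := by rw [hgx]
      _ ≤ |(∫ y, g c y ∂(K t x)) - g c x| := by
          rw [abs_sub_comm]; exact le_abs_self _
      _ ≤ η := hbound
  tfae_have 2 → 1 := by
    intro h2 f ε hε
    have hM : ∀ x, |f x| ≤ ‖f‖ := fun x => f.norm_coe_le_norm x
    set M := ‖f‖ with hMdef
    have hM0 : 0 ≤ M := norm_nonneg f
    obtain ⟨δ₀, hδ₀, hf⟩ := Metric.uniformContinuous_iff.mp
      (CompactSpace.uniformContinuous_of_continuous f.continuous) (ε/2) (by linarith)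
    have hηpos : (0:ℝ) < ε / (2*(2*M+1)) := by positivity
    obtain ⟨δ, hδpos, hδ⟩ := h2 δ₀ hδ₀ (ε / (2*(2*M+1))) hηpos
    refine ⟨δ, hδpos, fun t ht htδ x => ?_⟩
    haveI := hK t ht
    have hmeas : MeasurableSet ((Metric.ball x δ₀)ᶜ : Set S) := measurableSet_ball.compl
    have hpt : ∀ y, |f y - f x| ≤
        ε/2 + (2*M) * Set.indicator (Metric.ball x δ₀)ᶜ (1 : S → ℝ) y := by
      intro y
      by_cases hy : y ∈ (Metric.ball x δ₀)ᶜ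
      · simp only [Set.indicator_of_mem hy, Pi.one_apply]
        have : |f y - f x| ≤ 2*M := by
          have h1 := hM y; have h2 := hM x
          calc |f y - f x| ≤ |f y| + |f x| := abs_sub _ _
            _ ≤ 2*M := by linarith
        linarith
      · simp only [Set.indicator_of_notMem hy]
        have hyx : dist y x < δ₀ := by simpa [Metric.mem_ball] using hy
        have := hf hyx
        rw [Real.dist_eq] at this
        linarith
    have hint1 : Integrable (fun y => f y) (K t x) := aux_integrable _ f.continuous
    have he : (∫ y, f y ∂(K t x)) - f x = ∫ y, (f y - f x) ∂(K t x) := by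
      rw [integral_sub hint1 (integrable_const _), integral_const]; simp
    rw [he]
    have habs : |∫ y, (f y - f x) ∂(K t x)| ≤ ∫ y, |f y - f x| ∂(K t x) := by
      simpa [Real.norm_eq_abs] using
        norm_integral_le_integral_norm (μ := K t x) (fun y => f y - f x)
    refine habs.trans ?_
    have hind1 : Integrable (fun y => Set.indicator (Metric.ball x δ₀)ᶜ (1 : S → ℝ) y)
        (K t x) := (integrable_const (1:ℝ)).indicator hmeas
    have hind2 : Integrable (fun y =>
        (2*M) * Set.indicator (Metric.ball x δ₀)ᶜ (1 : S → ℝ) y) (K t x) :=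
      hind1.const_mul _
    have hintR : Integrable (fun y =>
        ε/2 + (2*M) * Set.indicator (Metric.ball x δ₀)ᶜ (1 : S → ℝ) y) (K t x) :=
      (integrable_const _).add hind2
    calc ∫ y, |f y - f x| ∂(K t x)
        ≤ ∫ y, (ε/2 + (2*M) * Set.indicator (Metric.ball x δ₀)ᶜ (1 : S → ℝ) y)
            ∂(K t x) :=
          integral_mono (hint1.sub (integrable_const _)).abs hintR hpt
      _ = ε/2 + (2*M) * ((K t x) (Metric.ball x δ₀)ᶜ).toReal := by
          rw [integral_add (integrable_const _) hind2,
            integral_const_mul, integral_indicator_one hmeas, Measure.real]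
          simp
      _ ≤ ε/2 + (2*M) * (ε / (2*(2*M+1))) := by
          have := hδ t ht htδ x
          nlinarith
      _ ≤ ε := by
          have hq : ε/(2*(2*M+1)) * (2*(2*M+1)) = ε := div_mul_cancel₀ _ (by positivity)
          have hq0 : (0:ℝ) ≤ ε/(2*(2*M+1)) := by positivity
          nlinarith
  tfae_have 2 → 3 := by
    intro h2 η hη
    obtain ⟨δ, hδpos, hδ⟩ := h2 (η/2) (by linarith) (η/(2*(D+1))) (by positivity)
    refine ⟨δ, hδpos, fun t ht htδ x => ?_⟩
    haveI := hK t ht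
    refine ciSup_le (fun f => ?_)
    rw [integral_dirac]
    have hmeas : MeasurableSet ((Metric.ball x (η/2))ᶜ : Set S) := measurableSet_ball.compl
    have hind1 : Integrable (fun y => Set.indicator (Metric.ball x (η/2))ᶜ (1 : S → ℝ) y)
        (K t x) := (integrable_const (1:ℝ)).indicator hmeas
    have hind2 : Integrable (fun y =>
        D * Set.indicator (Metric.ball x (η/2))ᶜ (1 : S → ℝ) y) (K t x) :=
      hind1.const_mul _
    have hpt : ∀ y, dist y x ≤
        η/2 + D * Set.indicator (Metric.ball x (η/2))ᶜ (1 : S → ℝ) y := by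
      intro y
      by_cases hy : y ∈ (Metric.ball x (η/2))ᶜ
      · simp only [Set.indicator_of_mem hy, Pi.one_apply]
        have : dist y x ≤ D :=
          Metric.dist_le_diam_of_mem isCompact_univ.isBounded (mem_univ _) (mem_univ _)
        linarith
      · simp only [Set.indicator_of_notMem hy]
        have hyx : dist y x < η/2 := by simpa [Metric.mem_ball] using hy
        simpa using hyx.le
    calc |(∫ y, f.1 y ∂(K t x)) - f.1 x| ≤ ∫ y, dist y x ∂(K t x) :=
          lip_bound _ x f.2
      _ ≤ ∫ y, (η/2 + D * Set.indicator (Metric.ball x (η/2))ᶜ (1 : S → ℝ) y)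
            ∂(K t x) := by
          refine integral_mono (aux_integrable _ (continuous_id.dist continuous_const))
            ((integrable_const _).add hind2) hpt
      _ = η/2 + D * ((K t x) (Metric.ball x (η/2))ᶜ).toReal := by
          rw [integral_add (integrable_const _) hind2,
            integral_const_mul, integral_indicator_one hmeas, Measure.real]
          simp
      _ ≤ η/2 + D * (η/(2*(D+1))) := by
          have := hδ t ht htδ x
          nlinarith
      _ ≤ η := by
          have hq : η/(2*(D+1)) * (2*(D+1)) = η := div_mul_cancel₀ _ (by positivity)
          have hq0 : (0:ℝ) ≤ η/(2*(D+1)) := by positivity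
          nlinarith
  tfae_have 3 → 2 := by
    intro h3 ε hε η hη
    obtain ⟨δ, hδpos, hδ⟩ := h3 (ε*η) (by positivity)
    refine ⟨δ, hδpos, fun t ht htδ x => ?_⟩
    haveI := hK t ht
    set fx : S → ℝ := fun y => min (dist y x) ε with hfx
    have hlip : LipschitzWith 1 fx := by
      have : LipschitzWith 1 (fun y : S => dist y x) := LipschitzWith.dist_left x
      exact this.min_const ε
    have hfx0 : fx x = 0 := by simp [hfx, min_eq_left hε.le]
    have hmeas : MeasurableSet ((Metric.ball x ε)ᶜ : Set S) := measurableSet_ball.compl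
    have hbdd : BddAbove (Set.range fun f : {f : S → ℝ // LipschitzWith 1 f} =>
        |∫ y, f.1 y ∂(K t x) - ∫ y, f.1 y ∂(Measure.dirac x)|) := by
      refine ⟨D, ?_⟩
      rintro r ⟨f, rfl⟩
      dsimp only
      rw [integral_dirac]
      exact lip_bound_diam _ x f.2
    have hkey : ε * ((K t x) (Metric.ball x ε)ᶜ).toReal ≤ ∫ y, fx y ∂(K t x) := by
      have hpt : ∀ y, ε * Set.indicator (Metric.ball x ε)ᶜ (1 : S → ℝ) y ≤ fx y := by
        intro y
        by_cases hy : y ∈ (Metric.ball x ε)ᶜ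
        · simp only [Set.indicator_of_mem hy, Pi.one_apply]
          have hyx : ε ≤ dist y x := by simpa [Metric.mem_ball, not_lt] using hy
          simp only [hfx, mul_one, le_min_iff]
          exact ⟨hyx, le_refl ε⟩
        · simp only [Set.indicator_of_notMem hy]
          simp only [hfx, mul_zero, le_min_iff]
          exact ⟨dist_nonneg, hε.le⟩
      have hind1 : Integrable (fun y => Set.indicator (Metric.ball x ε)ᶜ (1 : S → ℝ) y)
          (K t x) := (integrable_const (1:ℝ)).indicator hmeas
      calc ε * ((K t x) (Metric.ball x ε)ᶜ).toReal
          = ∫ y, ε * Set.indicator (Metric.ball x ε)ᶜ (1 : S → ℝ) y ∂(K t x) := by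
            rw [integral_const_mul, integral_indicator_one hmeas, Measure.real]
        _ ≤ ∫ y, fx y ∂(K t x) :=
            integral_mono (hind1.const_mul _) (aux_integrable _ hlip.continuous) hpt
    have hW : (∫ y, fx y ∂(K t x)) ≤ W1 (K t x) (Measure.dirac x) := by
      have h0 : (0:ℝ) ≤ ∫ y, fx y ∂(K t x) :=
        integral_nonneg (fun y => le_min dist_nonneg hε.le)
      have := le_ciSup hbdd (⟨fx, hlip⟩ : {f : S → ℝ // LipschitzWith 1 f})
      rw [integral_dirac] at this
      simp only [hfx0, sub_zero] at this
      calc (∫ y, fx y ∂(K t x)) = |∫ y, fx y ∂(K t x)| := (abs_of_nonneg h0).symm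
        _ ≤ W1 (K t x) (Measure.dirac x) := this
    have hfinal : ε * ((K t x) (Metric.ball x ε)ᶜ).toReal ≤ ε * η :=
      le_trans hkey (le_trans hW (hδ t ht htδ x))
    exact le_of_mul_le_mul_left hfinal hε
  tfae_finish
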